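/- Counting cross-relations from a regular partition: let (P,≺) be a finite poset with an ε-regular poset partition R = (V₁,…,V_k). Then for any two subsets S, T ⊆ P, |e(S,T) − e'(S,T)| ≤ 3ε·C(|P|,2), where e(S,T) = |{(x,y) ∈ S×T : x ≺ y}| and e'(S,T) = Σ_{i<j} d(V_i,V_j)·|V_i ∩ S|·|V_j ∩ T|. -/

import Mathlib

open scoped Classical

/-- Number of related pairs from `A` to `B`. -/
noncomputable def eRel {α : Type*} [PartialOrder α] (A B : Finset α) : ℕ :=
  ((A ×ˢ B).filter fun p => p.1 < p.2).card

/-- Density of the pair `(A, B)` (zero if `A` or `B` is empty). -/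
noncomputable def dens {α : Type*} [PartialOrder α] (A B : Finset α) : ℝ :=
  (eRel A B : ℝ) / ((A.card : ℝ) * (B.card : ℝ))

/-- The pair `(A,B)` is `ε`-regular. -/
def IsRegularPair {α : Type*} [PartialOrder α] (ε : ℝ) (A B : Finset α) : Prop :=
  ∀ X ⊆ A, ∀ Y ⊆ B, ε * (A.card : ℝ) ≤ (X.card : ℝ) → ε * (B.card : ℝ) ≤ (Y.card : ℝ) →
    |dens A B - dens X Y| < ε

/-- A poset partition: pairwise disjoint parts covering everything, with all
cross-relations going forward. -/
def IsPosetPartition {α : Type*} [Fintype α] [PartialOrder α] {k : ℕ}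
    (V : Fin k → Finset α) : Prop :=
  (∀ i j, i ≠ j → Disjoint (V i) (V j)) ∧
  (Finset.univ.biUnion V = (Finset.univ : Finset α)) ∧
  (∀ i j : Fin k, j < i → ∀ x ∈ V i, ∀ y ∈ V j, ¬ x < y)

/-- An `ε`-regular partition. -/
def IsRegularPartition {α : Type*} [Fintype α] [PartialOrder α] (ε : ℝ)
    {k : ℕ} (V : Fin k → Finset α) : Prop :=
  (∀ i, ((V i).card : ℝ) ≤ max (ε * (Fintype.card α : ℝ)) 1) ∧
  (∑ p ∈ Finset.univ.filter
      (fun p : Fin k × Fin k => p.1 < p.2 ∧ ¬ IsRegularPair ε (V p.1) (V p.2)),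
      ((V p.1).card : ℝ) * ((V p.2).card : ℝ)) ≤
    ε * (((Fintype.card α).choose 2 : ℕ) : ℝ)

section Aux
variable {α : Type*} [PartialOrder α]

lemma eRel_le_mul (X Y : Finset α) : (eRel X Y : ℝ) ≤ (X.card : ℝ) * Y.card := by
  have h : eRel X Y ≤ X.card * Y.card := by
    unfold eRel
    exact le_trans (Finset.card_filter_le _ _) (le_of_eq (Finset.card_product _ _))
  exact_mod_cast h

lemma dens_nonneg (X Y : Finset α) : 0 ≤ dens X Y := by
  unfold dens; positivity

lemma dens_le_one (X Y : Finset α) : dens X Y ≤ 1 := by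
  unfold dens
  rcases eq_or_lt_of_le (mul_nonneg (Nat.cast_nonneg _) (Nat.cast_nonneg _) :
      (0:ℝ) ≤ (X.card:ℝ) * Y.card) with h | h
  · rw [← h, div_zero]; norm_num
  · rw [div_le_one h]; exact eRel_le_mul X Y

lemma eRel_eq_dens (X Y : Finset α) (hX : 0 < X.card) (hY : 0 < Y.card) :
    (eRel X Y : ℝ) = dens X Y * X.card * Y.card := by
  unfold dens
  have hX' : ((X.card : ℝ)) ≠ 0 := by positivity
  have hY' : ((Y.card : ℝ)) ≠ 0 := by positivity
  field_simp

lemma pair_bound_core (X Y A B : Finset α) :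
    |(eRel X Y : ℝ) - dens A B * X.card * Y.card| ≤ (X.card : ℝ) * Y.card := by
  have h1 : (eRel X Y:ℝ) ≤ (X.card:ℝ) * Y.card := eRel_le_mul X Y
  have h0 : (0:ℝ) ≤ (X.card:ℝ) * Y.card := by positivity
  have hd0 := dens_nonneg A B
  have hd1 := dens_le_one A B
  have h2 : 0 ≤ dens A B * X.card * Y.card := by
    exact mul_nonneg (mul_nonneg hd0 (Nat.cast_nonneg _)) (Nat.cast_nonneg _)
  have h3 : dens A B * X.card * Y.card ≤ (X.card:ℝ) * Y.card := by nlinarith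
  have h4 : (0:ℝ) ≤ (eRel X Y : ℝ) := Nat.cast_nonneg _
  rw [abs_sub_le_iff]
  constructor <;> nlinarith

lemma eRel_zero_left (Y : Finset α) {X : Finset α} (h : X.card = 0) : eRel X Y = 0 := by
  rw [Finset.card_eq_zero] at h
  subst h
  simp [eRel]

lemma eRel_zero_right (X : Finset α) {Y : Finset α} (h : Y.card = 0) : eRel X Y = 0 := by
  rw [Finset.card_eq_zero] at h
  subst h
  simp [eRel]

lemma pair_bound_reg {ε : ℝ} (hε : 0 < ε) {A B : Finset α} (h : IsRegularPair ε A B)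
    {X Y : Finset α} (hX : X ⊆ A) (hY : Y ⊆ B) :
    |(eRel X Y : ℝ) - dens A B * X.card * Y.card| ≤ ε * ((A.card : ℝ) * B.card) := by
  have hXA : (X.card : ℝ) ≤ A.card := by exact_mod_cast Finset.card_le_card hX
  have hYB : (Y.card : ℝ) ≤ B.card := by exact_mod_cast Finset.card_le_card hY
  have hBnn : (0:ℝ) ≤ B.card := Nat.cast_nonneg _
  have hAnn : (0:ℝ) ≤ A.card := Nat.cast_nonneg _
  have hXnn : (0:ℝ) ≤ X.card := Nat.cast_nonneg _
  have hYnn : (0:ℝ) ≤ Y.card := Nat.cast_nonneg _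
  by_cases hx : (X.card : ℝ) < ε * A.card
  · refine (pair_bound_core X Y A B).trans ?_
    nlinarith
  by_cases hy : (Y.card : ℝ) < ε * B.card
  · refine (pair_bound_core X Y A B).trans ?_
    nlinarith
  push_neg at hx hy
  rcases Nat.eq_zero_or_pos X.card with hX0 | hX0
  · rw [eRel_zero_left Y hX0, hX0]
    simp
    positivity
  rcases Nat.eq_zero_or_pos Y.card with hY0 | hY0
  · rw [eRel_zero_right X hY0, hY0]
    simp
    positivity
  have hd := h X hX Y hY hx hy
  rw [eRel_eq_dens X Y hX0 hY0]
  have heq : dens X Y * X.card * Y.card - dens A B * X.card * Y.card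
      = (dens X Y - dens A B) * ((X.card : ℝ) * Y.card) := by ring
  rw [heq, abs_mul, abs_of_nonneg (by positivity : (0:ℝ) ≤ (X.card:ℝ) * Y.card)]
  have habs : |dens X Y - dens A B| ≤ ε := by rw [abs_sub_comm]; exact hd.le
  have hXY : (X.card : ℝ) * Y.card ≤ (A.card : ℝ) * B.card := by nlinarith
  calc |dens X Y - dens A B| * ((X.card:ℝ) * Y.card)
      ≤ ε * ((X.card:ℝ) * Y.card) :=
        mul_le_mul_of_nonneg_right habs (by positivity)
    _ ≤ ε * ((A.card : ℝ) * B.card) := mul_le_mul_of_nonneg_left hXY hε.le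

lemma eRel_diag_le (W X Y : Finset α) (hX : X ⊆ W) (hY : Y ⊆ W) :
    eRel X Y ≤ W.card.choose 2 := by
  rw [eRel, ← Finset.card_powersetCard 2 W]
  apply Finset.card_le_card_of_injOn (fun p => {p.1, p.2})
  · intro p hp
    simp only [Finset.coe_filter, Set.mem_setOf_eq, Finset.mem_coe, Finset.mem_filter, Finset.mem_product] at hp ⊢
    rw [Finset.mem_powersetCard]
    refine ⟨?_, Finset.card_pair (ne_of_lt hp.2)⟩
    intro z hz
    rcases Finset.mem_insert.mp hz with h | h
    · exact hX (h ▸ hp.1.1)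
    · exact hY ((Finset.mem_singleton.mp h) ▸ hp.1.2)
  · intro p hp q hq hpq
    simp only [Finset.coe_filter, Set.mem_setOf_eq, Finset.mem_product] at hp hq
    have hpq' : ({p.1, p.2} : Finset α) = {q.1, q.2} := hpq
    have h1 : p.1 ∈ ({q.1, q.2} : Finset α) := by
      rw [← hpq']; simp
    have h2 : p.2 ∈ ({q.1, q.2} : Finset α) := by
      rw [← hpq']; simp
    simp only [Finset.mem_insert, Finset.mem_singleton] at h1 h2
    have hplt := hp.2
    have hqlt := hq.2
    rcases h1 with h1 | h1 <;> rcases h2 with h2 | h2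
    · rw [h1, h2] at hplt; exact absurd hplt (lt_irrefl _)
    · exact Prod.ext h1 h2
    · rw [h1, h2] at hplt
      exact absurd (lt_trans hqlt hplt) (lt_irrefl _)
    · rw [h1, h2] at hplt; exact absurd hplt (lt_irrefl _)

end Aux

theorem stmt13 {α : Type*} [Fintype α] [PartialOrder α] (ε : ℝ) (hε : 0 < ε)
    {k : ℕ} (V : Fin k → Finset α)
    (hpp : IsPosetPartition V) (hreg : IsRegularPartition ε V)
    (S T : Finset α) :
    |(eRel S T : ℝ) -
        ∑ p ∈ Finset.univ.filter (fun p : Fin k × Fin k => p.1 < p.2),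
          dens (V p.1) (V p.2) * ((V p.1 ∩ S).card : ℝ) * ((V p.2 ∩ T).card : ℝ)| ≤
      3 * ε * (((Fintype.card α).choose 2 : ℕ) : ℝ) := by
  classical
  obtain ⟨hdisj, hcov, hfwd⟩ := hpp
  obtain ⟨hsize, hirr⟩ := hreg
  set n : ℕ := Fintype.card α with hn
  set C : ℝ := ((n.choose 2 : ℕ) : ℝ) with hC
  have hCnn : (0:ℝ) ≤ C := Nat.cast_nonneg _
  -- index of each element
  have hex : ∀ x : α, ∃ i, x ∈ V i := by
    intro x
    have hx : x ∈ Finset.univ.biUnion V := by rw [hcov]; exact Finset.mem_univ x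
    simpa using hx
  choose idx hidx using hex
  have hidx' : ∀ (x : α) (i : Fin k), x ∈ V i → idx x = i := by
    intro x i h
    by_contra hne
    exact Finset.disjoint_left.mp (hdisj _ _ hne) (hidx x) h
  have hcards : ∑ i : Fin k, (V i).card = n := by
    rw [← Finset.card_biUnion (fun i _ j hj hij => hdisj i j hij), hcov, Finset.card_univ]
  set f : Fin k × Fin k → ℝ := fun p => (eRel (V p.1 ∩ S) (V p.2 ∩ T) : ℝ) with hf
  set D : Fin k × Fin k → ℝ :=
    fun p => dens (V p.1) (V p.2) * ((V p.1 ∩ S).card : ℝ) * ((V p.2 ∩ T).card : ℝ) with hD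
  set Plt : Finset (Fin k × Fin k) :=
    Finset.univ.filter (fun p : Fin k × Fin k => p.1 < p.2) with hPlt
  -- decomposition of eRel S T
  have hdecomp : (eRel S T : ℝ) = ∑ p : Fin k × Fin k, f p := by
    have hnat : eRel S T = ∑ p : Fin k × Fin k, eRel (V p.1 ∩ S) (V p.2 ∩ T) := by
      rw [eRel, Finset.card_eq_sum_card_fiberwise
        (f := fun q : α × α => (idx q.1, idx q.2))
        (t := (Finset.univ : Finset (Fin k × Fin k))) (fun _ _ => Finset.mem_univ _)]
      refine Finset.sum_congr rfl fun p _ => ?_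
      rw [eRel]
      congr 1
      ext q
      simp only [Finset.mem_filter, Finset.mem_product, Finset.mem_inter]
      constructor
      · rintro ⟨⟨⟨hxS, hyT⟩, hlt⟩, hp⟩
        subst hp
        exact ⟨⟨⟨hidx q.1, hxS⟩, hidx q.2, hyT⟩, hlt⟩
      · rintro ⟨⟨⟨hxV, hxS⟩, hyV, hyT⟩, hlt⟩
        exact ⟨⟨⟨hxS, hyT⟩, hlt⟩, by rw [hidx' q.1 _ hxV, hidx' q.2 _ hyV]⟩
    rw [hnat]
    push_cast
    rfl
  have hzero : ∀ p : Fin k × Fin k, p.2 < p.1 → f p = 0 := by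
    intro p hp
    have : eRel (V p.1 ∩ S) (V p.2 ∩ T) = 0 := by
      rw [eRel, Finset.card_eq_zero, Finset.filter_eq_empty_iff]
      intro q hq
      rw [Finset.mem_product] at hq
      exact hfwd p.1 p.2 hp q.1 (Finset.mem_inter.mp hq.1).1 q.2 (Finset.mem_inter.mp hq.2).1
    simp [hf, this]
  have hsplit : (eRel S T : ℝ) = (∑ p ∈ Plt, f p) + ∑ i : Fin k, f (i, i) := by
    rw [hdecomp,
      ← Finset.sum_filter_add_sum_filter_not Finset.univ (fun p : Fin k × Fin k => p.1 < p.2) f]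
    congr 1
    have hsub : Finset.univ.filter (fun p : Fin k × Fin k => p.1 = p.2) ⊆
        Finset.univ.filter (fun p : Fin k × Fin k => ¬ p.1 < p.2) := by
      intro p hp
      simp only [Finset.mem_filter, Finset.mem_univ, true_and] at hp ⊢
      rw [hp]
      exact lt_irrefl _
    rw [← Finset.sum_subset hsub (by
      intro p hp hnp
      simp only [Finset.mem_filter, Finset.mem_univ, true_and] at hp hnp
      exact hzero p ((lt_or_gt_of_ne hnp).resolve_left hp))]
    rw [Finset.sum_filter, Fintype.sum_prod_type]
    simp
  -- the diagonal part
  have hdiagle : (∑ i : Fin k, f (i, i)) ≤ ε * C := by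
    have h1 : ∀ i : Fin k, f (i, i) ≤ ((V i).card.choose 2 : ℝ) := by
      intro i
      have h := eRel_diag_le (V i) (V i ∩ S) (V i ∩ T)
        Finset.inter_subset_left Finset.inter_subset_left
      simp only [hf]
      exact_mod_cast h
    refine (Finset.sum_le_sum (fun i _ => h1 i)).trans ?_
    rcases le_or_gt (ε * (n:ℝ)) 1 with hcase | hcase
    · have hz : ∀ i : Fin k, (V i).card.choose 2 = 0 := by
        intro i
        have h1' : ((V i).card : ℝ) ≤ 1 := (hsize i).trans (by rw [max_eq_right hcase])
        have h2' : (V i).card ≤ 1 := by exact_mod_cast h1'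
        exact Nat.choose_eq_zero_of_lt (by omega)
      simp only [hz, Nat.cast_zero, Finset.sum_const_zero]
      positivity
    · have hVle : ∀ i, ((V i).card : ℝ) ≤ ε * n := by
        intro i
        refine (hsize i).trans ?_
        rw [max_eq_left hcase.le]
      have hn1 : (1:ℝ) ≤ (n:ℝ) := by
        by_contra h'
        push_neg at h'
        have hn0 : n = 0 := by
          have := Nat.lt_one_iff.mp (by exact_mod_cast h')
          exact this
        rw [hn0] at hcase
        simp at hcase
        linarith
      set P := Finset.univ.filter (fun i : Fin k => (V i).card ≠ 0) with hP
      have hPcard : (1:ℝ) ≤ P.card := by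
        have hα : 0 < n := by exact_mod_cast lt_of_lt_of_le zero_lt_one hn1
        obtain ⟨x⟩ : Nonempty α := Fintype.card_pos_iff.mp hα
        have hmem : idx x ∈ P := by
          simp only [hP, Finset.mem_filter, Finset.mem_univ, true_and]
          exact (Finset.card_pos.mpr ⟨x, hidx x⟩).ne'
        have : 0 < P.card := Finset.card_pos.mpr ⟨idx x, hmem⟩
        exact_mod_cast this
      have hsumP : ∑ i ∈ P, ((V i).card : ℝ) = n := by
        rw [Finset.sum_subset (Finset.subset_univ P)]
        · rw [← Nat.cast_sum, hcards]
        · intro i _ hi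
          simp only [hP, Finset.mem_filter, Finset.mem_univ, true_and, not_not] at hi
          simp [hi]
      have h2 : ∑ i : Fin k, ((V i).card.choose 2 : ℝ) = ∑ i ∈ P, ((V i).card.choose 2 : ℝ) := by
        symm
        apply Finset.sum_subset (Finset.subset_univ P)
        intro i _ hi
        simp only [hP, Finset.mem_filter, Finset.mem_univ, true_and, not_not] at hi
        simp [hi]
      rw [h2]
      have h3 : ∀ i ∈ P, ((V i).card.choose 2 : ℝ) ≤ ε * n * (((V i).card : ℝ) - 1) / 2 := by
        intro i hi
        rw [Nat.cast_choose_two]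
        have hge1 : (1:ℝ) ≤ ((V i).card : ℝ) := by
          simp only [hP, Finset.mem_filter, Finset.mem_univ, true_and] at hi
          exact_mod_cast Nat.one_le_iff_ne_zero.mpr hi
        have hle := hVle i
        have : ((V i).card : ℝ) * (((V i).card : ℝ) - 1) ≤ ε * n * (((V i).card : ℝ) - 1) :=
          mul_le_mul_of_nonneg_right hle (by linarith)
        linarith
      refine (Finset.sum_le_sum h3).trans ?_
      have h4 : ∑ i ∈ P, ε * n * (((V i).card : ℝ) - 1) / 2
          = ε * n * ((n:ℝ) - P.card) / 2 := by
        rw [← Finset.sum_div, ← Finset.mul_sum, Finset.sum_sub_distrib, hsumP,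
          Finset.sum_const, nsmul_eq_mul, mul_one]
      rw [h4, hC, Nat.cast_choose_two]
      have hεn : (0:ℝ) ≤ ε * n := by positivity
      nlinarith
  -- the cross-pair sums of |V i||V j|
  have hVV : (∑ p ∈ Plt, ((V p.1).card : ℝ) * ((V p.2).card : ℝ)) ≤ C := by
    set g : Fin k × Fin k → ℝ := fun p => ((V p.1).card : ℝ) * ((V p.2).card : ℝ) with hg
    have htot : ∑ p : Fin k × Fin k, g p = (n:ℝ)^2 := by
      rw [Fintype.sum_prod_type]
      simp only [hg]
      rw [← Finset.sum_mul_sum]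
      have hs : ∑ i : Fin k, ((V i).card : ℝ) = (n:ℝ) := by
        rw [← Nat.cast_sum, hcards]
      rw [hs]
      ring
    have hdiagsum : ∑ p ∈ Finset.univ.filter (fun p : Fin k × Fin k => p.1 = p.2), g p
        = ∑ i : Fin k, ((V i).card : ℝ)^2 := by
      rw [Finset.sum_filter, Fintype.sum_prod_type]
      simp [hg, sq]
    have hswap : ∑ p ∈ Finset.univ.filter (fun p : Fin k × Fin k => p.2 < p.1), g p
        = ∑ p ∈ Plt, g p := by
      refine Finset.sum_nbij' Prod.swap Prod.swap ?_ ?_ ?_ ?_ ?_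
      · intro p hp
        simp only [hPlt, Finset.mem_filter, Finset.mem_univ, true_and,
          Prod.fst_swap, Prod.snd_swap] at hp ⊢
        exact hp
      · intro p hp
        simp only [hPlt, Finset.mem_filter, Finset.mem_univ, true_and,
          Prod.fst_swap, Prod.snd_swap] at hp ⊢
        exact hp
      · intro p _; rfl
      · intro p _; rfl
      · intro p _
        simp [hg, Prod.swap, mul_comm]
    have hsplit2 : ∑ p : Fin k × Fin k, g p
        = (∑ p ∈ Plt, g p)
          + ((∑ p ∈ Finset.univ.filter (fun p : Fin k × Fin k => p.1 = p.2), g p)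
            + ∑ p ∈ Finset.univ.filter (fun p : Fin k × Fin k => p.2 < p.1), g p) := by
      rw [← Finset.sum_filter_add_sum_filter_not Finset.univ
        (fun p : Fin k × Fin k => p.1 < p.2) g]
      congr 1
      rw [← Finset.sum_filter_add_sum_filter_not
        (Finset.univ.filter (fun p : Fin k × Fin k => ¬ p.1 < p.2))
        (fun p : Fin k × Fin k => p.1 = p.2) g]
      congr 1
      · apply Finset.sum_congr _ (fun _ _ => rfl)
        rw [Finset.filter_filter]
        apply Finset.filter_congr
        intro p _
        constructor
        · rintro ⟨_, h⟩; exact h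
        · intro h; exact ⟨by rw [h]; exact lt_irrefl _, h⟩
      · apply Finset.sum_congr _ (fun _ _ => rfl)
        rw [Finset.filter_filter]
        apply Finset.filter_congr
        intro p _
        constructor
        · rintro ⟨h1, h2⟩; exact (lt_or_gt_of_ne h2).resolve_left h1
        · intro h; exact ⟨fun h' => absurd (lt_trans h h') (lt_irrefl _), (ne_of_lt h).symm⟩
    have hsqge : (n:ℝ) ≤ ∑ i : Fin k, ((V i).card : ℝ)^2 := by
      have : ∀ i : Fin k, ((V i).card : ℝ) ≤ ((V i).card : ℝ)^2 := by
        intro i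
        rcases Nat.eq_zero_or_pos (V i).card with h | h
        · simp [h]
        · have h1 : (1:ℝ) ≤ ((V i).card : ℝ) := by exact_mod_cast h
          nlinarith
      calc (n:ℝ) = ∑ i : Fin k, ((V i).card : ℝ) := by rw [← Nat.cast_sum, hcards]
        _ ≤ _ := Finset.sum_le_sum fun i _ => this i
    rw [hswap, hdiagsum, htot] at hsplit2
    rw [hC, Nat.cast_choose_two]
    have : (∑ p ∈ Plt, g p) ≤ ((n:ℝ)^2 - (n:ℝ)) / 2 := by linarith
    refine this.trans (le_of_eq (by ring))
  -- per-pair bounds summed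
  have hcross : (∑ p ∈ Plt, |f p - D p|) ≤ ε * C + ε * C := by
    have hpt : ∀ p ∈ Plt, |f p - D p| ≤
        (if IsRegularPair ε (V p.1) (V p.2)
          then ε * (((V p.1).card : ℝ) * ((V p.2).card : ℝ))
          else ((V p.1).card : ℝ) * ((V p.2).card : ℝ)) := by
      intro p _
      by_cases hr : IsRegularPair ε (V p.1) (V p.2)
      · rw [if_pos hr]
        exact pair_bound_reg hε hr Finset.inter_subset_left Finset.inter_subset_left
      · rw [if_neg hr]
        refine (pair_bound_core _ _ _ _).trans ?_
        have h1 : ((V p.1 ∩ S).card : ℝ) ≤ ((V p.1).card : ℝ) := by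
          exact_mod_cast Finset.card_le_card Finset.inter_subset_left
        have h2 : ((V p.2 ∩ T).card : ℝ) ≤ ((V p.2).card : ℝ) := by
          exact_mod_cast Finset.card_le_card Finset.inter_subset_left
        exact mul_le_mul h1 h2 (Nat.cast_nonneg _) (Nat.cast_nonneg _)
    refine (Finset.sum_le_sum hpt).trans ?_
    rw [Finset.sum_ite]
    have hA : (∑ p ∈ Plt.filter (fun p => IsRegularPair ε (V p.1) (V p.2)),
        ε * (((V p.1).card : ℝ) * ((V p.2).card : ℝ))) ≤ ε * C := by
      rw [← Finset.mul_sum]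
      refine mul_le_mul_of_nonneg_left ?_ hε.le
      refine le_trans (Finset.sum_le_sum_of_subset_of_nonneg (Finset.filter_subset _ _) ?_) hVV
      intro p _ _
      positivity
    have hB : (∑ p ∈ Plt.filter (fun p => ¬ IsRegularPair ε (V p.1) (V p.2)),
        ((V p.1).card : ℝ) * ((V p.2).card : ℝ)) ≤ ε * C := by
      rw [hPlt, Finset.filter_filter]
      exact hirr
    linarith
  -- final assembly
  have hfinal : |(eRel S T : ℝ) - ∑ p ∈ Plt, D p| ≤ (ε * C + ε * C) + ε * C := by
    rw [hsplit]
    have heq : (∑ p ∈ Plt, f p) + (∑ i : Fin k, f (i, i)) - ∑ p ∈ Plt, D p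
        = (∑ p ∈ Plt, (f p - D p)) + ∑ i : Fin k, f (i, i) := by
      rw [Finset.sum_sub_distrib]
      ring
    rw [heq]
    refine (abs_add_le _ _).trans ?_
    have habs1 : |∑ p ∈ Plt, (f p - D p)| ≤ ∑ p ∈ Plt, |f p - D p| :=
      Finset.abs_sum_le_sum_abs _ _
    have habs2 : |∑ i : Fin k, f (i, i)| = ∑ i : Fin k, f (i, i) := by
      rw [abs_of_nonneg]
      exact Finset.sum_nonneg fun i _ => Nat.cast_nonneg _
    rw [habs2]
    linarith
  calc |(eRel S T : ℝ) - ∑ p ∈ Plt, D p| ≤ (ε * C + ε * C) + ε * C := hfinal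
    _ = 3 * ε * C := by ring
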